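/- Let r ∈ (0,1) be rational with -1/r = [a_1,...,a_m] (entries ≤ -2) and let s = 1 - r with -1/s = [c_1,...,c_l] (entries ≤ -2). Then the concatenated negative continued fraction [a_m, ..., a_1, -1, c_1, ..., c_l] equals 0; equivalently, the linear chain of unknots with these framings blows down to a single 0-framed unknot. -/

import Mathlib

/-- Negative continued fraction: `ncf [a] = a`, `ncf (a :: l) = a - 1 / ncf l`. -/
def ncf : List ℤ → ℚ
  | [] => 0
  | a :: l => (a : ℚ) - 1 / ncf l

lemma ncf_lt_neg_one : ∀ l : List ℤ, l ≠ [] → (∀ a ∈ l, a ≤ -2) → ncf l < -1 := by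
  intro l
  induction l with
  | nil => intro h; exact absurd rfl h
  | cons a l ih =>
    intro _ h
    have ha : (a : ℚ) ≤ -2 := by exact_mod_cast h a List.mem_cons_self
    rcases eq_or_ne l [] with rfl | hl
    · simp [ncf]; linarith
    · have hlt := ih hl (fun b hb => h b (List.mem_cons_of_mem a hb))
      have hne : ncf l ≠ 0 := by linarith [hlt]; 
      have hmul : ncf l * (1 / ncf l) = 1 := by field_simp
      have h1 : -1 < 1 / ncf l := by nlinarith
      have h2 : 1 / ncf l < 0 := div_neg_of_pos_of_neg one_pos (by linarith)
      show (a : ℚ) - 1 / ncf l < -1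
      linarith

lemma key : ∀ A : List ℤ, (∀ a ∈ A, a ≤ -2) → ∀ r : ℚ, 0 < r → r < 1 →
    ncf A = -1 / r → ∀ T : List ℤ, ncf T = -r → ncf (A.reverse ++ T) = 0 := by
  intro A
  induction A with
  | nil =>
    intro _ r hr0 _ hA _ _
    exfalso
    have h0 : ncf ([] : List ℤ) = 0 := rfl
    have hneg : (-1 : ℚ) / r < 0 := div_neg_of_neg_of_pos (by norm_num) hr0
    rw [h0] at hA
    rw [← hA] at hneg
    exact lt_irrefl 0 hneg
  | cons a A ih =>
    intro h r hr0 hr1 hA T hT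
    have ha : (a : ℚ) ≤ -2 := by exact_mod_cast h a List.mem_cons_self
    have hrne : r ≠ 0 := ne_of_gt hr0
    rcases eq_or_ne A [] with rfl | hAne
    · have hA' : (a : ℚ) = -1 / r := by simpa [ncf] using hA
      show ncf ([a].reverse ++ T) = 0
      have : ncf ([a].reverse ++ T) = (a : ℚ) - 1 / ncf T := by simp [ncf]
      rw [this, hT, hA']
      field_simp
      ring
    · have hlt := ncf_lt_neg_one A hAne (fun b hb => h b (List.mem_cons_of_mem a hb))
      have hxne : ncf A ≠ 0 := by linarith
      have hA2 : (a : ℚ) - 1 / ncf A = -1 / r := by simpa [ncf] using hA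
      set x := ncf A with hx
      set r' := -1 / x with hr'
      have hr'0 : 0 < r' := by
        rw [hr']
        exact div_pos_of_neg_of_neg (by norm_num) (by linarith)
      have hr'1 : r' < 1 := by
        rw [hr']
        rw [div_lt_one_of_neg (by linarith : x < 0)]
        linarith
      have hxeq : x = -1 / r' := by
        rw [hr']; field_simp
      have hT' : ncf (a :: T) = -r' := by
        show (a : ℚ) - 1 / ncf T = -r'
        rw [hT, hr']
        rw [neg_div] at hA2
        have h1x : 1 / x = (a : ℚ) + 1 / r := by linarith
        rw [div_neg, neg_div, neg_neg]
        linarith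
      have hres := ih (fun b hb => h b (List.mem_cons_of_mem a hb)) r' hr'0 hr'1 hxeq (a :: T) hT'
      have hlist : (a :: A).reverse ++ T = A.reverse ++ (a :: T) := by
        simp [List.reverse_cons, List.append_assoc]
      rw [hlist]
      exact hres

/-- If `-1/r = [a_1,…,a_m]` and `-1/(1-r) = [c_1,…,c_l]` (entries `≤ -2`), then the
concatenated negative continued fraction `[a_m,…,a_1,-1,c_1,…,c_l]` evaluates to `0`:
the chain of unknots with these framings blows down to a single `0`-framed unknot. -/
theorem concatenated_chain_evaluates_to_zero (r s : ℚ)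
    (hr0 : 0 < r) (hr1 : r < 1) (hs : s = 1 - r)
    (A C : List ℤ) (hA : ∀ a ∈ A, a ≤ -2) (hC : ∀ c ∈ C, c ≤ -2)
    (eA : ncf A = -1 / r) (eC : ncf C = -1 / s) :
    ncf (A.reverse ++ (-1 : ℤ) :: C) = 0 := by
  have hs0 : 0 < s := by rw [hs]; linarith
  have hsne : s ≠ 0 := ne_of_gt hs0
  have hT : ncf ((-1 : ℤ) :: C) = -r := by
    show ((-1 : ℤ) : ℚ) - 1 / ncf C = -r
    rw [eC, hs]
    field_simp
    push_cast; ring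
  exact key A hA r hr0 hr1 eA _ hT
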